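/- arXiv:1702.01317 — 3 statements merged into one kernel-verified Lean document; each statement's English description precedes it below -/
import Mathlib

section
/- Let δ ∈ (0,1] and a = (2+δ)/(1+δ). Let P and Q be mutually absolutely continuous probability measures on a measurable space such that the Radon–Nikodym derivative satisfies dP/dQ ≤ η almost everywhere, for some η > 1. Then ∫ |log₂(dP/dQ)|^a dP ≤ 2·max( 2, η·(log₂ η)^a/(η−1) )·‖P − Q‖_TV. -/
open MeasureTheory

noncomputable section

/-- Total variation distance between two measures. -/
noncomputable def tvDist {α : Type*} [MeasurableSpace α] (μ ν : Measure α) : ℝ :=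
  sSup {r : ℝ | ∃ B : Set α, MeasurableSet B ∧ r = |(μ B).toReal - (ν B).toReal|}

lemma aux1 {a t η : ℝ} (ha1 : 1 ≤ a) (hη : 1 < η) (ht1 : 1 ≤ t) (htη : t ≤ η) :
    t * Real.logb 2 t ^ a ≤ η * Real.logb 2 η ^ a / (η - 1) * (t - 1) := by
  rcases eq_or_lt_of_le ht1 with rfl | ht1'
  · simp [Real.logb_one, Real.zero_rpow (by linarith : a ≠ 0)]
  · have hlog2 : (0:ℝ) < Real.log 2 := Real.log_pos one_lt_two
    have hlt : 0 < Real.logb 2 t := Real.logb_pos one_lt_two ht1'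
    have hlη : 0 < Real.logb 2 η := Real.logb_pos one_lt_two hη
    have hmono : Real.logb 2 t ≤ Real.logb 2 η :=
      Real.logb_le_logb_of_le one_lt_two (by linarith) htη
    have hc : (0:ℝ) ≤ Real.logb 2 η ^ (a - 1) := Real.rpow_nonneg hlη.le _
    have hpow : Real.logb 2 t ^ a ≤ Real.logb 2 η ^ (a - 1) * Real.logb 2 t := by
      have h1 : Real.logb 2 t ^ a = Real.logb 2 t ^ (a - 1) * Real.logb 2 t := by
        rw [← Real.rpow_add_one hlt.ne' (a - 1)]; ring_nf
      rw [h1]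
      exact mul_le_mul_of_nonneg_right
        (Real.rpow_le_rpow hlt.le hmono (by linarith)) hlt.le
    have hηsplit : Real.logb 2 η ^ a = Real.logb 2 η ^ (a - 1) * Real.logb 2 η := by
      rw [← Real.rpow_add_one hlη.ne' (a - 1)]; ring_nf
    have hsec := (Real.convexOn_mul_log).secant_mono
      (Set.mem_Ici.mpr zero_le_one)
      (Set.mem_Ici.mpr (by linarith : (0:ℝ) ≤ t))
      (Set.mem_Ici.mpr (by linarith : (0:ℝ) ≤ η))
      (by linarith : t ≠ 1) (by linarith : η ≠ 1) htη
    simp only [Real.log_one, mul_zero, sub_zero, mul_one] at hsec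
    rw [div_le_div_iff₀ (by linarith) (by linarith)] at hsec
    -- hsec : t * Real.log t * (η - 1) ≤ η * Real.log η * (t - 1)
    rw [div_mul_eq_mul_div, le_div_iff₀ (by linarith : (0:ℝ) < η - 1)]
    rw [hηsplit]
    set c := Real.logb 2 η ^ (a - 1) with hcdef
    have h2 := mul_le_mul_of_nonneg_left hsec (div_nonneg hc hlog2.le)
    calc t * Real.logb 2 t ^ a * (η - 1)
        ≤ t * (c * Real.logb 2 t) * (η - 1) :=
          mul_le_mul_of_nonneg_right (mul_le_mul_of_nonneg_left hpow (by linarith)) (by linarith)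
      _ ≤ η * (c * Real.logb 2 η) * (t - 1) := by
          rw [Real.logb, Real.logb]
          rw [div_eq_mul_inv] at *
          ring_nf
          ring_nf at h2
          linarith

lemma aux2 {a t : ℝ} (ha1 : 1 ≤ a) (ha2 : a ≤ 2) (ht0 : 0 < t) (ht1 : t ≤ 1) :
    t * |Real.logb 2 t| ^ a ≤ 2 * (1 - t) := by
  have hlog2 : (0:ℝ) < Real.log 2 := Real.log_pos one_lt_two
  have hlog2' : (1:ℝ)/2 ≤ Real.log 2 := by
    have := Real.log_two_gt_d9; linarith
  have habs : |Real.logb 2 t| = -Real.logb 2 t :=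
    abs_of_nonpos (Real.logb_nonpos one_lt_two ht0.le ht1)
  rcases eq_or_lt_of_le ht1 with rfl | ht1'
  · simp [Real.logb_one, Real.zero_rpow (by linarith : a ≠ 0)]
  rw [habs]
  have hs0 : 0 < -Real.logb 2 t := by
    have := Real.logb_neg one_lt_two ht0 ht1'; linarith
  rcases le_or_gt (1/2 : ℝ) t with hhalf | hhalf
  · -- 1/2 ≤ t < 1
    have hsle : -Real.logb 2 t ≤ 1 := by
      have h1 : Real.logb 2 (1/2 : ℝ) ≤ Real.logb 2 t :=
        Real.logb_le_logb_of_le one_lt_two (by norm_num) hhalf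
      have h2 : Real.logb 2 (1/2 : ℝ) = -1 := by
        rw [show (1/2 : ℝ) = 2⁻¹ by norm_num, Real.logb_inv,
          Real.logb_self_eq_one one_lt_two]
      linarith
    have hkey : t * (-Real.log t) ≤ 1 - t := by
      have h3 := Real.log_le_sub_one_of_pos (show (0:ℝ) < t⁻¹ by positivity)
      rw [Real.log_inv] at h3
      have h4 := mul_le_mul_of_nonneg_left h3 ht0.le
      have h5 : t * t⁻¹ = 1 := mul_inv_cancel₀ ht0.ne'
      nlinarith
    have hsplit : (-Real.logb 2 t) ^ a = (-Real.logb 2 t) ^ (a-1) * (-Real.logb 2 t) := by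
      rw [← Real.rpow_add_one hs0.ne' (a-1)]; ring_nf
    have hpow1 : (-Real.logb 2 t) ^ (a-1) ≤ 1 := Real.rpow_le_one hs0.le hsle (by linarith)
    have hlb : -Real.logb 2 t = (-Real.log t) / Real.log 2 := by
      rw [Real.logb]; ring
    calc t * (-Real.logb 2 t) ^ a
        = t * ((-Real.logb 2 t) ^ (a-1) * (-Real.logb 2 t)) := by rw [hsplit]
      _ ≤ t * (1 * (-Real.logb 2 t)) := by
          apply mul_le_mul_of_nonneg_left _ ht0.le
          exact mul_le_mul_of_nonneg_right hpow1 hs0.le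
      _ = (t * (-Real.log t)) / Real.log 2 := by rw [hlb]; ring
      _ ≤ (1 - t) / Real.log 2 := by gcongr
      _ ≤ 2 * (1 - t) := by
          rw [div_le_iff₀ hlog2]
          nlinarith
  · -- t < 1/2
    set s := -Real.logb 2 t with hsdef
    have hs1 : 1 < s := by
      have h1 : Real.logb 2 t < Real.logb 2 (1/2 : ℝ) := by
        exact (Real.logb_lt_logb_iff one_lt_two ht0 (by norm_num)).mpr hhalf
      have h2 : Real.logb 2 (1/2 : ℝ) = -1 := by
        rw [show (1/2 : ℝ) = 2⁻¹ by norm_num, Real.logb_inv,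
          Real.logb_self_eq_one one_lt_two]
      rw [hsdef]; rw [h2] at h1; linarith
    set L := Real.log 2 with hLdef
    have ht_eq : t = Real.exp (-(s * L)) := by
      have h2 : (2:ℝ) ^ Real.logb 2 t = t := Real.rpow_logb two_pos (by norm_num) ht0
      rw [← h2, Real.rpow_def_of_pos two_pos]
      congr 1
      rw [hsdef]; ring
    have hL1 : (0.6931471803 : ℝ) < L := Real.log_two_gt_d9
    have hsa : s ^ a ≤ s * s := by
      have h1 : s ^ a ≤ s ^ (2:ℝ) :=
        Real.rpow_le_rpow_of_exponent_le (by linarith) ha2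
      have h2 : s ^ (2:ℝ) = s * s := by
        rw [show (2:ℝ) = ((2:ℕ):ℝ) by norm_num, Real.rpow_natCast]; ring
      rw [h2] at h1; exact h1
    have hsL : (0:ℝ) ≤ s * L := by positivity
    have hexp : 1 + s*L + (s*L)^2/2 + (s*L)^3/6 ≤ Real.exp (s*L) := by
      have h := Real.sum_le_exp_of_nonneg hsL 4
      simpa [Finset.sum_range_succ, Nat.factorial] using h
    have hquad : s ≤ 2*L + L^2*s + L^3*s^2/3 := by
      have hstep : s ≤ 2*(0.6931471803:ℝ) + (0.6931471803:ℝ)^2*s + (0.6931471803:ℝ)^3*s^2/3 := by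
        nlinarith [sq_nonneg (s - 2.3), sq_nonneg (s - 2.4), sq_nonneg (s - 2.35)]
      have hs0' : (0:ℝ) ≤ s := by linarith
      nlinarith [sq_nonneg s, mul_le_mul_of_nonneg_right hL1.le hs0']
    have hcube : s^2 ≤ 2*L*s + L^2*s^2 + L^3*s^3/3 := by
      have := mul_le_mul_of_nonneg_left hquad (by linarith : (0:ℝ) ≤ s)
      nlinarith [this]
    have hfin : s*s + 2 ≤ 2 * Real.exp (s*L) := by nlinarith [hexp, hcube]
    have hEpos : (0:ℝ) < Real.exp (s*L) := Real.exp_pos _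
    have htE : t = (Real.exp (s*L))⁻¹ := by rw [ht_eq, Real.exp_neg]
    rw [htE]
    have h1 : (Real.exp (s*L))⁻¹ * s ^ a ≤ (Real.exp (s*L))⁻¹ * (s*s) :=
      mul_le_mul_of_nonneg_left hsa (by positivity)
    have h2 : (Real.exp (s*L))⁻¹ * (s*s) ≤ 2 * (1 - (Real.exp (s*L))⁻¹) := by
      have h3 := mul_le_mul_of_nonneg_left hfin (by positivity : (0:ℝ) ≤ (Real.exp (s*L))⁻¹)
      have h4 : (Real.exp (s*L))⁻¹ * Real.exp (s*L) = 1 := inv_mul_cancel₀ hEpos.ne'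
      have h5 : (Real.exp (s*L))⁻¹ * (2 * Real.exp (s*L)) = 2 := by
        calc (Real.exp (s*L))⁻¹ * (2 * Real.exp (s*L))
            = 2 * ((Real.exp (s*L))⁻¹ * Real.exp (s*L)) := by ring
          _ = 2 := by rw [h4]; norm_num
      rw [h5] at h3
      linarith [h3]
    calc (Real.exp (s*L))⁻¹ * s ^ a ≤ (Real.exp (s*L))⁻¹ * (s*s) := h1
      _ ≤ 2 * (1 - (Real.exp (s*L))⁻¹) := h2

lemma aux3 {a t η : ℝ} (ha1 : 1 ≤ a) (ha2 : a ≤ 2) (hη : 1 < η) (ht0 : 0 < t) (htη : t ≤ η) :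
    t * |Real.logb 2 t| ^ a ≤ max 2 (η * Real.logb 2 η ^ a / (η - 1)) * |t - 1| := by
  rcases le_or_gt 1 t with h1 | h1
  · rw [abs_of_nonneg (Real.logb_nonneg one_lt_two h1), abs_of_nonneg (by linarith : (0:ℝ) ≤ t - 1)]
    calc t * Real.logb 2 t ^ a ≤ η * Real.logb 2 η ^ a / (η - 1) * (t - 1) :=
          aux1 ha1 hη h1 htη
      _ ≤ max 2 (η * Real.logb 2 η ^ a / (η - 1)) * (t - 1) :=
          mul_le_mul_of_nonneg_right (le_max_right _ _) (by linarith)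
  · rw [abs_of_nonpos (by linarith : t - 1 ≤ 0)]
    calc t * |Real.logb 2 t| ^ a ≤ 2 * (1 - t) := aux2 ha1 ha2 ht0 h1.le
      _ ≤ max 2 (η * Real.logb 2 η ^ a / (η - 1)) * -(t - 1) := by
          have := le_max_left (2:ℝ) (η * Real.logb 2 η ^ a / (η - 1))
          nlinarith

/-- **Key inequality in the proof of Lemma 1: a Kullback–Leibler-type moment is controlled by
the total variation distance.** -/
theorem log_moment_le_tvDist
    {α : Type} [MeasurableSpace α] (P Q : Measure α)
    [IsProbabilityMeasure P] [IsProbabilityMeasure Q]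
    (habs : P ≪ Q ∧ Q ≪ P)
    (δ η : ℝ) (hδ : δ ∈ Set.Ioc (0:ℝ) 1) (hη : 1 < η)
    (hbound : ∀ᵐ x ∂Q, P.rnDeriv Q x ≤ ENNReal.ofReal η) :
    ∫ x, |Real.logb 2 ((P.rnDeriv Q x).toReal)| ^ ((2 + δ) / (1 + δ)) ∂P ≤
      2 * max 2 (η * (Real.logb 2 η) ^ ((2 + δ) / (1 + δ)) / (η - 1)) * tvDist P Q := by
  obtain ⟨hPQ, hQP⟩ := habs
  obtain ⟨hδ0, hδ1⟩ := hδ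
  set a := (2 + δ) / (1 + δ) with hadef
  have ha1 : 1 ≤ a := by
    rw [hadef, le_div_iff₀ (by linarith)]; linarith
  have ha2 : a ≤ 2 := by
    rw [hadef, div_le_iff₀ (by linarith)]; linarith
  set M := max 2 (η * Real.logb 2 η ^ a / (η - 1)) with hMdef
  have hM2 : (2:ℝ) ≤ M := le_max_left _ _
  set g : α → ℝ := fun x => (P.rnDeriv Q x).toReal with hgdef
  have hgmeas : Measurable g := (Measure.measurable_rnDeriv P Q).ennreal_toReal
  have hfmeas : Measurable (fun x => |Real.logb 2 (g x)| ^ a) := by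
    have h1 : Measurable (fun x => Real.logb 2 (g x)) :=
      (Real.measurable_log.comp hgmeas).div_const (Real.log 2)
    exact (Real.continuous_rpow_const (by linarith : (0:ℝ) ≤ a)).measurable.comp h1.abs
  have hint_g : Integrable g Q := Measure.integrable_toReal_rnDeriv
  have hint_abs : Integrable (fun x => |g x - 1|) Q := (hint_g.sub (integrable_const 1)).abs
  -- pointwise bound a.e.
  have hae : ∀ᵐ x ∂Q, g x * |Real.logb 2 (g x)| ^ a ≤ M * |g x - 1| := by
    filter_upwards [hbound, Measure.rnDeriv_lt_top P Q,
      hQP.ae_le (Measure.rnDeriv_pos hPQ)] with x hb hlt hpos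
    have hg0 : 0 < g x := ENNReal.toReal_pos hpos.ne' hlt.ne
    have hgη : g x ≤ η := ENNReal.toReal_le_of_le_ofReal (by linarith) hb
    exact aux3 ha1 ha2 hη hg0 hgη
  -- change of measure
  have hchg : ∫ x, |Real.logb 2 (g x)| ^ a ∂P = ∫ x, g x * |Real.logb 2 (g x)| ^ a ∂Q := by
    rw [← MeasureTheory.integral_rnDeriv_smul hPQ (f := fun x => |Real.logb 2 (g x)| ^ a)]
    simp only [smul_eq_mul, hgdef]
  -- integrability of the product
  have hint_prod : Integrable (fun x => g x * |Real.logb 2 (g x)| ^ a) Q := by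
    apply Integrable.mono' (hint_abs.const_mul M) ((hgmeas.mul hfmeas).aestronglyMeasurable)
    filter_upwards [hae] with x hx
    rw [Real.norm_eq_abs, Pi.mul_apply, abs_of_nonneg
      (mul_nonneg (ENNReal.toReal_nonneg : (0:ℝ) ≤ g x) (Real.rpow_nonneg (abs_nonneg _) _))]
    exact hx
  have hstep : ∫ x, g x * |Real.logb 2 (g x)| ^ a ∂Q ≤ M * ∫ x, |g x - 1| ∂Q := by
    calc ∫ x, g x * |Real.logb 2 (g x)| ^ a ∂Q ≤ ∫ x, M * |g x - 1| ∂Q :=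
          integral_mono_ae hint_prod (hint_abs.const_mul M) hae
      _ = M * ∫ x, |g x - 1| ∂Q := integral_const_mul M _
  -- total variation computation
  set B := {x | 1 ≤ g x} with hBdef
  have hB : MeasurableSet B := hgmeas measurableSet_Ici
  have hPB : ∫ x in B, g x ∂Q = (P B).toReal := by
    rw [← Measure.setLIntegral_rnDeriv hPQ B]
    rw [MeasureTheory.integral_toReal ((Measure.measurable_rnDeriv P Q).aemeasurable.restrict)
      (ae_restrict_of_ae (Measure.rnDeriv_lt_top P Q))]
  have hPBc : ∫ x in Bᶜ, g x ∂Q = (P Bᶜ).toReal := by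
    rw [← Measure.setLIntegral_rnDeriv hPQ Bᶜ]
    rw [MeasureTheory.integral_toReal ((Measure.measurable_rnDeriv P Q).aemeasurable.restrict)
      (ae_restrict_of_ae (Measure.rnDeriv_lt_top P Q))]
  have e1 : ∫ x in B, |g x - 1| ∂Q = (P B).toReal - (Q B).toReal := by
    rw [setIntegral_congr_fun hB (g := fun x => g x - 1)
      (fun x hx => abs_of_nonneg (sub_nonneg.mpr hx))]
    rw [integral_sub hint_g.integrableOn (integrable_const 1).integrableOn]
    rw [hPB, setIntegral_const]
    simp
    rfl
  have e2 : ∫ x in Bᶜ, |g x - 1| ∂Q = (Q Bᶜ).toReal - (P Bᶜ).toReal := by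
    rw [setIntegral_congr_fun hB.compl (g := fun x => 1 - g x)
      (fun x hx => by
        have : g x < 1 := lt_of_not_ge hx
        rw [abs_of_nonpos (by linarith)]; ring)]
    rw [integral_sub (integrable_const 1).integrableOn hint_g.integrableOn]
    rw [hPBc, setIntegral_const]
    simp
    rfl
  have hsum : ∫ x, |g x - 1| ∂Q
      = ((P B).toReal - (Q B).toReal) + ((Q Bᶜ).toReal - (P Bᶜ).toReal) := by
    rw [← e1, ← e2, integral_add_compl hB hint_abs]
  have cP : (P B).toReal + (P Bᶜ).toReal = 1 := by
    have h := measure_add_measure_compl (μ := P) hB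
    rw [measure_univ] at h
    have := congrArg ENNReal.toReal h
    rwa [ENNReal.toReal_add (measure_ne_top P B) (measure_ne_top P Bᶜ), ENNReal.toReal_one] at this
  have cQ : (Q B).toReal + (Q Bᶜ).toReal = 1 := by
    have h := measure_add_measure_compl (μ := Q) hB
    rw [measure_univ] at h
    have := congrArg ENNReal.toReal h
    rwa [ENNReal.toReal_add (measure_ne_top Q B) (measure_ne_top Q Bᶜ), ENNReal.toReal_one] at this
  have htotal : ∫ x, |g x - 1| ∂Q = 2 * ((P B).toReal - (Q B).toReal) := by
    rw [hsum]; linarith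
  have htv : (P B).toReal - (Q B).toReal ≤ tvDist P Q := by
    have hbdd : BddAbove {r : ℝ | ∃ C : Set α, MeasurableSet C ∧
        r = |(P C).toReal - (Q C).toReal|} := by
      refine ⟨1, ?_⟩
      rintro r ⟨C, hC, rfl⟩
      have h1 : (P C).toReal ≤ 1 := by
        have := ENNReal.toReal_mono (by simp) (prob_le_one (μ := P) (s := C))
        simpa using this
      have h2 : (Q C).toReal ≤ 1 := by
        have := ENNReal.toReal_mono (by simp) (prob_le_one (μ := Q) (s := C))
        simpa using this
      have h3 : (0:ℝ) ≤ (P C).toReal := ENNReal.toReal_nonneg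
      have h4 : (0:ℝ) ≤ (Q C).toReal := ENNReal.toReal_nonneg
      rw [abs_le]; constructor <;> linarith
    have hmem : |(P B).toReal - (Q B).toReal| ∈ {r : ℝ | ∃ C : Set α, MeasurableSet C ∧
        r = |(P C).toReal - (Q C).toReal|} := ⟨B, hB, rfl⟩
    calc (P B).toReal - (Q B).toReal ≤ |(P B).toReal - (Q B).toReal| := le_abs_self _
      _ ≤ tvDist P Q := le_csSup hbdd hmem
  calc ∫ x, |Real.logb 2 (g x)| ^ a ∂P
      = ∫ x, g x * |Real.logb 2 (g x)| ^ a ∂Q := hchg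
    _ ≤ M * ∫ x, |g x - 1| ∂Q := hstep
    _ = M * (2 * ((P B).toReal - (Q B).toReal)) := by rw [htotal]
    _ ≤ M * (2 * tvDist P Q) := by
        apply mul_le_mul_of_nonneg_left _ (by linarith : (0:ℝ) ≤ M)
        linarith
    _ = 2 * M * tvDist P Q := by ring
end
end

section
/- Let δ ∈ (0,1] and a = (2+δ)/(1+δ), and define h(x) = x·|log₂ x|^a / |x−1| for x > 0, x ≠ 1. Then (i) h is an increasing function on (1,∞), and (ii) h(x) ≤ 2 for all x ∈ (0,1). -/
noncomputable section

lemma aux_key (a t : ℝ) (ha1 : 1 ≤ a) (ha2 : a ≤ 2) (ht : 0 < t) :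
    t ^ a ≤ 2 * (Real.exp (Real.log 2 * t) - 1) := by
  have hc : (0.6931471803 : ℝ) < Real.log 2 := Real.log_two_gt_d9
  rcases le_or_gt t 1 with h1 | h1
  · have h2 : t ^ a ≤ t ^ (1:ℝ) := Real.rpow_le_rpow_of_exponent_ge ht h1 ha1
    rw [Real.rpow_one] at h2
    have h3 : Real.log 2 * t + 1 ≤ Real.exp (Real.log 2 * t) := Real.add_one_le_exp _
    nlinarith
  · have h2 : t ^ a ≤ t ^ (2:ℝ) := Real.rpow_le_rpow_of_exponent_le h1.le ha2
    rw [show (2:ℝ) = ((2:ℕ):ℝ) by norm_num, Real.rpow_natCast] at h2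
    have hs : (0:ℝ) ≤ Real.log 2 * t := by nlinarith
    have h3 := Real.sum_le_exp_of_nonneg hs 4
    rw [Finset.sum_range_succ, Finset.sum_range_succ, Finset.sum_range_succ,
      Finset.sum_range_succ, Finset.sum_range_zero] at h3
    norm_num [Nat.factorial] at h3
    set c := Real.log 2 with hcdef
    have hc2 : (0.48:ℝ) ≤ c^2 := by nlinarith
    have hc3 : (0.333:ℝ) ≤ c^3 := by nlinarith
    have hq : 0 ≤ (c^3/3)*t^2 - (1-c^2)*t + 2*c := by
      nlinarith [sq_nonneg (t - 2.35), sq_nonneg t, ht.le]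
    have hq2 := mul_nonneg ht.le hq
    have goal2 : t^2 ≤ 2 * ((1 + c*t + (c*t)^2/2 + (c*t)^3/6) - 1) := by nlinarith
    calc t ^ a ≤ t^2 := h2
      _ ≤ 2 * ((1 + c*t + (c*t)^2/2 + (c*t)^3/6) - 1) := goal2
      _ ≤ 2 * (Real.exp (c*t) - 1) := by linarith

lemma aux_mono (a : ℝ) (ha1 : 1 ≤ a) :
    StrictMonoOn (fun x : ℝ => x * (Real.logb 2 x) ^ a / (x - 1)) (Set.Ioi 1) := by
  have hc : (0:ℝ) < Real.log 2 := Real.log_pos one_lt_two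
  have hd : ∀ x ∈ Set.Ioi (1:ℝ), HasDerivAt (fun x : ℝ => x * (Real.logb 2 x) ^ a / (x - 1))
      (((1 * Real.logb 2 x ^ a + x * (x⁻¹ / Real.log 2 * a * Real.logb 2 x ^ (a-1))) * (x-1)
        - x * Real.logb 2 x ^ a * 1) / (x-1)^2) x := by
    intro x hx
    have hx1 : (1:ℝ) < x := hx
    have hx0 : (0:ℝ) < x := by linarith
    have hLpos : 0 < Real.logb 2 x := Real.logb_pos one_lt_two hx1
    have hL : HasDerivAt (fun y : ℝ => Real.logb 2 y) (x⁻¹ / Real.log 2) x := by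
      simpa [Real.logb] using (Real.hasDerivAt_log hx0.ne').div_const (Real.log 2)
    have hu : HasDerivAt (fun y : ℝ => Real.logb 2 y ^ a)
        (x⁻¹ / Real.log 2 * a * Real.logb 2 x ^ (a-1)) x :=
      hL.rpow_const (Or.inl hLpos.ne')
    have hnum : HasDerivAt (fun y : ℝ => y * Real.logb 2 y ^ a)
        (1 * Real.logb 2 x ^ a + x * (x⁻¹ / Real.log 2 * a * Real.logb 2 x ^ (a-1))) x :=
      (hasDerivAt_id x).mul hu
    have hden : HasDerivAt (fun y : ℝ => y - 1) 1 x := (hasDerivAt_id x).sub_const 1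
    exact hnum.div hden (by linarith)
  apply strictMonoOn_of_deriv_pos (convex_Ioi 1)
  · intro x hx
    exact ((hd x hx).continuousAt).continuousWithinAt
  · intro x hx
    rw [interior_Ioi] at hx
    rw [(hd x hx).deriv]
    have hx1 : (1:ℝ) < x := hx
    have hx0 : (0:ℝ) < x := by linarith
    have hLpos : 0 < Real.logb 2 x := Real.logb_pos one_lt_two hx1
    have hPpos : 0 < Real.logb 2 x ^ (a-1) := Real.rpow_pos_of_pos hLpos _
    have hLa : Real.logb 2 x ^ a = Real.logb 2 x ^ (a-1) * Real.logb 2 x := by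
      rw [← Real.rpow_add_one hLpos.ne' (a-1), sub_add_cancel]
    have hlog : Real.log x < x - 1 := Real.log_lt_sub_one_of_pos hx0 (by linarith)
    have hkey : 0 < a * (x-1) - Real.log x := by nlinarith
    have hLdef : Real.logb 2 x = Real.log x / Real.log 2 := rfl
    have hfact : (1 * Real.logb 2 x ^ a + x * (x⁻¹ / Real.log 2 * a * Real.logb 2 x ^ (a-1))) * (x-1)
        - x * Real.logb 2 x ^ a * 1
        = Real.logb 2 x ^ (a-1) * ((a * (x-1) - Real.log x) / Real.log 2) := by
      rw [hLa, hLdef]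
      field_simp
      ring
    rw [hfact]
    exact div_pos (mul_pos hPpos (div_pos hkey hc)) (pow_pos (by linarith) 2)

/-- **Properties of `h(x) = x·|log₂ x|^{(2+δ)/(1+δ)} / |x−1|`:** it is increasing on `(1,∞)` and
bounded by `2` on `(0,1)`. -/
theorem h_increasing_and_bounded (δ : ℝ) (hδ : δ ∈ Set.Ioc (0:ℝ) 1) :
    StrictMonoOn
      (fun x : ℝ => x * |Real.logb 2 x| ^ ((2 + δ) / (1 + δ)) / |x - 1|) (Set.Ioi 1) ∧
    ∀ x ∈ Set.Ioo (0:ℝ) 1,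
      x * |Real.logb 2 x| ^ ((2 + δ) / (1 + δ)) / |x - 1| ≤ 2 := by
  obtain ⟨hδ0, hδ1⟩ := hδ
  set a : ℝ := (2 + δ) / (1 + δ) with ha
  have hδ' : (0:ℝ) < 1 + δ := by linarith
  have ha1 : 1 ≤ a := by rw [ha, le_div_iff₀ hδ']; linarith
  have ha2 : a ≤ 2 := by rw [ha, div_le_iff₀ hδ']; linarith
  have hc : (0:ℝ) < Real.log 2 := Real.log_pos one_lt_two
  constructor
  · intro x hx y hy hxy
    have hx1 : (1:ℝ) < x := hx
    have hy1 : (1:ℝ) < y := hy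
    have ex : ∀ z : ℝ, 1 < z →
        z * |Real.logb 2 z| ^ a / |z - 1| = z * (Real.logb 2 z) ^ a / (z - 1) := by
      intro z hz
      rw [abs_of_pos (Real.logb_pos one_lt_two hz), abs_of_pos (by linarith : (0:ℝ) < z - 1)]
    simp only [ex x hx1, ex y hy1]
    exact aux_mono a ha1 hx hy hxy
  · intro x hx
    obtain ⟨hx0, hx1⟩ := hx
    have hlogneg : Real.log x < 0 := Real.log_neg hx0 hx1
    set t : ℝ := -Real.log x / Real.log 2 with htdef
    have ht : 0 < t := div_pos (by linarith) hc
    have habs1 : |Real.logb 2 x| = t := by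
      rw [htdef]
      have : Real.logb 2 x = Real.log x / Real.log 2 := rfl
      rw [this, abs_of_neg (div_neg_of_neg_of_pos hlogneg hc)]
      ring
    have habs2 : |x - 1| = 1 - x := by rw [abs_of_neg (by linarith : x - 1 < 0)]; ring
    have hexp : Real.exp (Real.log 2 * t) = x⁻¹ := by
      have h' : Real.log 2 * t = -Real.log x := by rw [htdef]; field_simp
      rw [h', Real.exp_neg, Real.exp_log hx0]
    have hkey := aux_key a t ha1 ha2 ht
    rw [hexp] at hkey
    rw [habs1, habs2, div_le_iff₀ (by linarith : (0:ℝ) < 1 - x)]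
    have := mul_le_mul_of_nonneg_left hkey hx0.le
    calc x * t ^ a ≤ x * (2 * (x⁻¹ - 1)) := this
      _ = 2 * (1 - x) := by field_simp
end
end

section
/- Let A be a finite set with |A| = l, let m < n, and let P̃ be an m-Markov probability measure on A^n, i.e., P̃(x_{1:n}) = P̃(x_{1:m})·Π_{j=m+1}^n P̃(x_j | x_{j−1},…,x_{j−m}). Enumerate A^{m+1} as a_1^{m},…,a_{l^{m+1}}^{m} and let Q_j = P̃(last coordinate of a_j^m | first m coordinates of a_j^m). For x ∈ A^n define the empirical block frequencies f_j(x) = (Σ_{k=m+1}^n 1{x_{k−m:k} = a_j^m})/(n−m), and the type class T_x = { z ∈ A^n : z_{1:m} = x_{1:m} and f_j(z) = f_j(x) for all j }. Then for every x ∈ A^n with all Q_j appearing in x positive: |T_x| ≤ 2^{ −(n−m)·Σ_{j=1}^{l^{m+1}} f_j(x)·log₂ Q_j }. -/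
noncomputable section

/-- Extend a string of length `n` to `ℕ → A` (by `default` beyond `n`). -/
def extArr {A : Type*} [Inhabited A] {n : ℕ} (z : Fin n → A) : ℕ → A :=
  fun k => if h : k < n then z ⟨k, h⟩ else default

/-- The `(m+1)`-block of `y` ending at position `k`: the preceding `m` symbols and `y k`. -/
def blockAt {A : Type*} (y : ℕ → A) (m k : ℕ) : (Fin m → A) × A :=
  (fun i : Fin m => y (k - m + i), y k)

/-- The number of occurrences of the block `b` at positions `m ≤ k < n`. -/
def blockFreq {A : Type*} [DecidableEq A] (y : ℕ → A) (m n : ℕ) (b : (Fin m → A) × A) : ℕ :=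
  ((Finset.Ico m n).filter fun k => blockAt y m k = b).card

/-- The type class of `x ∈ A^n`: strings with the same first `m` symbols and the same
`(m+1)`-block frequencies. -/
def typeClass {A : Type*} [Inhabited A] [DecidableEq A] (m n : ℕ) (x : Fin n → A) :
    Set (Fin n → A) :=
  {z | (∀ i : Fin n, (i : ℕ) < m → z i = x i) ∧
    ∀ b : (Fin m → A) × A, blockFreq (extArr z) m n b = blockFreq (extArr x) m n b}

lemma extArr_snoc_of_lt {A : Type*} [Inhabited A] {N : ℕ} (z : Fin N → A) (a : A) {j : ℕ}
    (hj : j < N) : extArr (Fin.snoc z a) j = extArr z j := by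
  unfold extArr
  rw [dif_pos (Nat.lt_succ_of_lt hj), dif_pos hj]
  simp [Fin.snoc, hj]

lemma extArr_snoc_last {A : Type*} [Inhabited A] {N : ℕ} (z : Fin N → A) (a : A) :
    extArr (Fin.snoc z a) N = a := by
  unfold extArr
  rw [dif_pos (Nat.lt_succ_self N)]
  simp [Fin.snoc]

lemma key_sum {A : Type} [Fintype A] [Inhabited A] [DecidableEq A]
    (m : ℕ) (Qt : (Fin m → A) → A → ℝ) (hQtsum : ∀ w : Fin m → A, ∑ a : A, Qt w a = 1)
    (x : ℕ → A) :
    ∀ N, m ≤ N →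
      ∑ z : Fin N → A,
        (if ∀ i : Fin N, (i : ℕ) < m → z i = x i then
          ∏ k ∈ Finset.Ico m N, Qt (blockAt (extArr z) m k).1 (blockAt (extArr z) m k).2
        else 0) = 1 := by
  intro N
  induction N with
  | zero =>
    intro hm
    have hm0 : m = 0 := Nat.le_zero.mp hm
    subst hm0
    simp [Subsingleton.elim (α := Fin 0 → A)]
  | succ N ih =>
    intro hm
    rcases eq_or_lt_of_le hm with heq | hlt
    · -- base : m = N + 1
      have hcond : ∀ z : Fin (N+1) → A,
          (∀ i : Fin (N+1), (i : ℕ) < m → z i = x i) ↔ z = fun i : Fin (N+1) => x i := by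
        intro z
        constructor
        · intro h; funext i; exact h i (heq ▸ i.isLt)
        · rintro rfl i _; rfl
      have hIco : Finset.Ico m (N+1) = ∅ := by rw [← heq]; exact Finset.Ico_self m
      simp only [hcond, hIco, Finset.prod_empty]
      simp
    · have hmN : m ≤ N := Nat.lt_succ_iff.mp hlt
      rw [← Equiv.sum_comp (Fin.snocEquiv (fun _ : Fin (N+1) => A))]
      rw [Fintype.sum_prod_type, Finset.sum_comm]
      have hstep : ∀ (z : Fin N → A) (a : A),
          (if ∀ i : Fin (N+1), (i : ℕ) < m →
              (Fin.snocEquiv (fun _ : Fin (N+1) => A) (a, z)) i = x i then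
            ∏ k ∈ Finset.Ico m (N+1),
              Qt (blockAt (extArr (Fin.snocEquiv (fun _ : Fin (N+1) => A) (a, z))) m k).1
                 (blockAt (extArr (Fin.snocEquiv (fun _ : Fin (N+1) => A) (a, z))) m k).2
          else 0)
          = (if ∀ i : Fin N, (i : ℕ) < m → z i = x i then
              (∏ k ∈ Finset.Ico m N, Qt (blockAt (extArr z) m k).1 (blockAt (extArr z) m k).2)
                * Qt (fun i : Fin m => extArr z (N - m + i)) a
            else 0) := by
        intro z a
        have hzeq : (Fin.snocEquiv (fun _ : Fin (N+1) => A) (a, z)) = Fin.snoc z a := by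
          funext i; rfl
        rw [hzeq]
        have hcond : (∀ i : Fin (N+1), (i : ℕ) < m → (Fin.snoc z a : Fin (N+1) → A) i = x i) ↔
            (∀ i : Fin N, (i : ℕ) < m → z i = x i) := by
          constructor
          · intro h i hi
            have := h (Fin.castSucc i) hi
            rwa [Fin.snoc_castSucc] at this
          · intro h i hi
            have hiN : (i : ℕ) < N := lt_of_lt_of_le hi hmN
            have : i = Fin.castSucc ⟨(i : ℕ), hiN⟩ := by
              apply Fin.ext; rfl
            rw [this, Fin.snoc_castSucc]
            exact h _ hi
        rw [if_congr hcond rfl rfl]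
        by_cases hc : ∀ i : Fin N, (i : ℕ) < m → z i = x i
        · rw [if_pos hc, if_pos hc, Finset.prod_Ico_succ_top hmN]
          congr 1
          · apply Finset.prod_congr rfl
            intro k hk
            obtain ⟨hk1, hk2⟩ := Finset.mem_Ico.mp hk
            have hblock : blockAt (extArr (Fin.snoc z a)) m k = blockAt (extArr z) m k := by
              unfold blockAt
              congr 1
              · funext i
                have : k - m + (i : ℕ) < N := by omega
                exact extArr_snoc_of_lt z a this
              · exact extArr_snoc_of_lt z a hk2
            rw [hblock]
          · unfold blockAt
            have h1 : (fun i : Fin m => extArr (Fin.snoc z a) (N - m + (i : ℕ)))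
                = fun i : Fin m => extArr z (N - m + (i : ℕ)) := by
              funext i
              have : N - m + (i : ℕ) < N := by omega
              exact extArr_snoc_of_lt z a this
            rw [extArr_snoc_last, h1]
        · rw [if_neg hc, if_neg hc]
      calc ∑ z : Fin N → A, ∑ a : A,
            (if ∀ i : Fin (N+1), (i : ℕ) < m →
                (Fin.snocEquiv (fun _ : Fin (N+1) => A) (a, z)) i = x i then
              ∏ k ∈ Finset.Ico m (N+1),
                Qt (blockAt (extArr (Fin.snocEquiv (fun _ : Fin (N+1) => A) (a, z))) m k).1
                   (blockAt (extArr (Fin.snocEquiv (fun _ : Fin (N+1) => A) (a, z))) m k).2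
            else 0)
          = ∑ z : Fin N → A,
            (if ∀ i : Fin N, (i : ℕ) < m → z i = x i then
              ∏ k ∈ Finset.Ico m N, Qt (blockAt (extArr z) m k).1 (blockAt (extArr z) m k).2
            else 0) := by
            apply Finset.sum_congr rfl
            intro z _
            rw [Finset.sum_congr rfl (fun a _ => hstep z a)]
            by_cases hc : ∀ i : Fin N, (i : ℕ) < m → z i = x i
            · simp only [if_pos hc, ← Finset.mul_sum, hQtsum, mul_one]
            · simp only [if_neg hc, Finset.sum_const_zero]
        _ = 1 := ih hmN

theorem typeClass_card_le'
    {A : Type} [Fintype A] [Inhabited A] [DecidableEq A]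
    (m n : ℕ) (hmn : m < n)
    (P0 : (Fin m → A) → ℝ) (Qt : (Fin m → A) → A → ℝ)
    (hP0 : ∀ w, 0 ≤ P0 w) (hP0sum : ∑ w : Fin m → A, P0 w = 1)
    (hQt : ∀ w a, 0 ≤ Qt w a) (hQtsum : ∀ w : Fin m → A, ∑ a : A, Qt w a = 1)
    (x : Fin n → A)
    (hpos : ∀ k ∈ Finset.Ico m n,
      0 < Qt (fun i : Fin m => extArr x (k - m + i)) (extArr x k)) :
    (({z | (∀ i : Fin n, (i : ℕ) < m → z i = x i) ∧
    ∀ b : (Fin m → A) × A, blockFreq (extArr z) m n b = blockFreq (extArr x) m n b} : Set (Fin n → A)).ncard : ℝ) ≤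
      2 ^ (-(((n : ℝ) - m) *
        ∑ b : (Fin m → A) × A,
          ((blockFreq (extArr x) m n b : ℝ) / ((n : ℝ) - m)) * Real.logb 2 (Qt b.1 b.2))) := by
  classical
  set T : Set (Fin n → A) := {z | (∀ i : Fin n, (i : ℕ) < m → z i = x i) ∧
    ∀ b : (Fin m → A) × A, blockFreq (extArr z) m n b = blockFreq (extArr x) m n b} with hT
  set p : ℝ := ∏ b : (Fin m → A) × A, Qt b.1 b.2 ^ blockFreq (extArr x) m n b with hp
  -- each element of T has "probability" p
  have prodA : ∀ z : Fin n → A, z ∈ T →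
      ∏ k ∈ Finset.Ico m n, Qt (blockAt (extArr z) m k).1 (blockAt (extArr z) m k).2 = p := by
    intro z hz
    rw [hp, ← Finset.prod_fiberwise_of_maps_to
      (g := fun k => blockAt (extArr z) m k) (t := Finset.univ)
      (fun k _ => Finset.mem_univ _)
      (fun k => Qt (blockAt (extArr z) m k).1 (blockAt (extArr z) m k).2)]
    apply Finset.prod_congr rfl
    intro b _
    rw [Finset.prod_congr rfl (fun k hk => ?_), Finset.prod_const]
    · rw [show ((Finset.Ico m n).filter fun k => blockAt (extArr z) m k = b).card
          = blockFreq (extArr z) m n b from rfl, hz.2 b]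
    · rw [(Finset.mem_filter.mp hk).2]
  -- positivity of p
  have hppos : 0 < p := by
    apply Finset.prod_pos
    intro b _
    by_cases hb : blockFreq (extArr x) m n b = 0
    · rw [hb, pow_zero]; exact one_pos
    · obtain ⟨k, hk⟩ := Finset.card_pos.mp (Nat.pos_of_ne_zero hb)
      obtain ⟨hk1, hk2⟩ := Finset.mem_filter.mp hk
      have := hpos k hk1
      rw [show (fun i : Fin m => extArr x (k - m + (i : ℕ))) = (blockAt (extArr x) m k).1 from rfl,
        show extArr x k = (blockAt (extArr x) m k).2 from rfl, hk2] at this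
      exact pow_pos this _
  -- T is finite
  have hTfin : T.Finite := Set.toFinite T
  -- counting bound : card * p ≤ 1
  have hcount : (T.ncard : ℝ) * p ≤ 1 := by
    rw [← key_sum m Qt hQtsum (extArr x) n (le_of_lt hmn)]
    rw [Set.ncard_eq_toFinset_card T hTfin]
    calc (hTfin.toFinset.card : ℝ) * p
        = ∑ z ∈ hTfin.toFinset,
            (if ∀ i : Fin n, (i : ℕ) < m → z i = extArr x i then
              ∏ k ∈ Finset.Ico m n, Qt (blockAt (extArr z) m k).1 (blockAt (extArr z) m k).2
            else 0) := by
          rw [Finset.sum_congr rfl (g := fun _ => p) ?_, Finset.sum_const, nsmul_eq_mul]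
          intro z hz
          have hz' : z ∈ T := hTfin.mem_toFinset.mp hz
          have hcond : ∀ i : Fin n, (i : ℕ) < m → z i = extArr x i := by
            intro i hi
            rw [hz'.1 i hi]
            unfold extArr
            rw [dif_pos i.isLt]
          rw [if_pos hcond]
          exact prodA z hz'
      _ ≤ ∑ z : Fin n → A,
            (if ∀ i : Fin n, (i : ℕ) < m → z i = extArr x i then
              ∏ k ∈ Finset.Ico m n, Qt (blockAt (extArr z) m k).1 (blockAt (extArr z) m k).2
            else 0) := by
          apply Finset.sum_le_sum_of_subset_of_nonneg (Finset.subset_univ _)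
          intro z _ _
          split
          · exact Finset.prod_nonneg fun k _ => hQt _ _
          · exact le_refl 0
  -- rewrite the exponent
  have hnm : ((n : ℝ) - m) ≠ 0 := by
    have : (m : ℝ) < n := by exact_mod_cast hmn
    linarith
  have hexp : (((n : ℝ) - m) *
        ∑ b : (Fin m → A) × A,
          ((blockFreq (extArr x) m n b : ℝ) / ((n : ℝ) - m)) * Real.logb 2 (Qt b.1 b.2))
      = ∑ b : (Fin m → A) × A,
          (blockFreq (extArr x) m n b : ℝ) * Real.logb 2 (Qt b.1 b.2) := by
    rw [Finset.mul_sum]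
    apply Finset.sum_congr rfl
    intro b _
    field_simp
  -- 2 ^ exponent = p
  have h2S : (2 : ℝ) ^ (∑ b : (Fin m → A) × A,
      (blockFreq (extArr x) m n b : ℝ) * Real.logb 2 (Qt b.1 b.2)) = p := by
    rw [Real.rpow_sum_of_pos two_pos]
    apply Finset.prod_congr rfl
    intro b _
    by_cases hb : blockFreq (extArr x) m n b = 0
    · rw [hb]; simp
    · obtain ⟨k, hk⟩ := Finset.card_pos.mp (Nat.pos_of_ne_zero hb)
      obtain ⟨hk1, hk2⟩ := Finset.mem_filter.mp hk
      have hQb : 0 < Qt b.1 b.2 := by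
        have := hpos k hk1
        rwa [show (fun i : Fin m => extArr x (k - m + (i : ℕ))) = (blockAt (extArr x) m k).1 from rfl,
          show extArr x k = (blockAt (extArr x) m k).2 from rfl, hk2] at this
      rw [mul_comm, Real.rpow_mul (by norm_num : (0:ℝ) ≤ 2),
        Real.rpow_logb two_pos (by norm_num) hQb, Real.rpow_natCast]
  rw [Real.rpow_neg (by norm_num : (0:ℝ) ≤ 2), hexp, h2S, ← one_div, le_div_iff₀ hppos]
  exact hcount

/-- **The counting bound for type classes of an `m`-Markov measure.** -/
theorem typeClass_card_le
    {A : Type} [Fintype A] [Inhabited A] [DecidableEq A]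
    (m n : ℕ) (hmn : m < n)
    -- the m-Markov measure P̃ on A^n: initial distribution P0 and transition probabilities Qt
    (P0 : (Fin m → A) → ℝ) (Qt : (Fin m → A) → A → ℝ)
    (hP0 : ∀ w, 0 ≤ P0 w) (hP0sum : ∑ w : Fin m → A, P0 w = 1)
    (hQt : ∀ w a, 0 ≤ Qt w a) (hQtsum : ∀ w : Fin m → A, ∑ a : A, Qt w a = 1)
    (x : Fin n → A)
    -- all transition probabilities appearing in x are positive
    (hpos : ∀ k ∈ Finset.Ico m n,
      0 < Qt (fun i : Fin m => extArr x (k - m + i)) (extArr x k)) :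
    ((typeClass m n x).ncard : ℝ) ≤
      2 ^ (-(((n : ℝ) - m) *
        ∑ b : (Fin m → A) × A,
          ((blockFreq (extArr x) m n b : ℝ) / ((n : ℝ) - m)) * Real.logb 2 (Qt b.1 b.2))) := by
  exact typeClass_card_le' m n hmn P0 Qt hP0 hP0sum hQt hQtsum x hpos
end
end
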